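/- Let k > 0 and let B : ℝ → (ℝⁿ →L[ℝ] ℝⁿ) be differentiable and satisfy the matrix Riccati equation B'(t) + B(t)² + k·id = 0 for all t ∈ [0, π/√k]. Then B(0) has no real eigenvalue; in particular, if n is odd, then no such B exists. -/

import Mathlib

open Real

/-- A monic real polynomial of odd degree has a real root. -/
lemma aux_exists_root_of_odd_natDegree (p : Polynomial ℝ) (hm : p.Monic)
    (ho : Odd p.natDegree) : ∃ x, p.IsRoot x := by
  have hdeg : 0 < p.natDegree := Nat.pos_of_ne_zero (by rintro h; rw [h] at ho; simp at ho)
  have hdeg' : 0 < p.degree := Polynomial.natDegree_pos_iff_degree_pos.mp hdeg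
  have h1 : Filter.Tendsto (fun x => p.eval x) Filter.atTop Filter.atTop :=
    Polynomial.tendsto_atTop_of_leadingCoeff_nonneg p hdeg' (by rw [hm.leadingCoeff]; norm_num)
  set q := p.comp (-Polynomial.X) with hq
  have hqx : Polynomial.natDegree (-Polynomial.X : Polynomial ℝ) = 1 := by simp
  have hqdeg : q.natDegree = p.natDegree := by
    rw [hq, Polynomial.natDegree_comp, hqx, mul_one]
  have hqlead : q.leadingCoeff = -1 := by
    rw [hq, Polynomial.leadingCoeff_comp (by rw [hqx]; norm_num)]
    simp [hm.leadingCoeff, ho.neg_one_pow]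
  have hqdeg' : 0 < q.degree :=
    Polynomial.natDegree_pos_iff_degree_pos.mp (by rw [hqdeg]; exact hdeg)
  have h2 : Filter.Tendsto (fun x => q.eval x) Filter.atTop Filter.atBot :=
    Polynomial.tendsto_atBot_of_leadingCoeff_nonpos q hqdeg' (by rw [hqlead]; norm_num)
  obtain ⟨b, hb⟩ := (h2.eventually (Filter.eventually_lt_atBot 0)).exists
  have hb' : p.eval (-b) < 0 := by
    rwa [hq, Polynomial.eval_comp, Polynomial.eval_neg, Polynomial.eval_X] at hb
  obtain ⟨a, ha, hab⟩ :=
    ((h1.eventually (Filter.eventually_gt_atTop 0)).and (Filter.eventually_ge_atTop (-b))).exists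
  have hivt := intermediate_value_Icc hab (p.continuous_aeval.continuousOn)
  have h0 : (0 : ℝ) ∈ Set.Icc (p.eval (-b)) (p.eval a) := ⟨hb'.le, ha.le⟩
  obtain ⟨x, _, hx⟩ := hivt (by simpa using h0)
  exact ⟨x, by simpa using hx⟩

/-- Evaluating the characteristic polynomial gives the determinant of `t • 1 - M`. -/
lemma aux_eval_charpoly {m : Type*} [Fintype m] [DecidableEq m] (M : Matrix m m ℝ) (t : ℝ) :
    M.charpoly.eval t = (t • (1 : Matrix m m ℝ) - M).det := by
  rw [Matrix.charpoly, ← Polynomial.coe_evalRingHom, RingHom.map_det]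
  congr 1
  ext i j
  by_cases h : i = j
  · subst h
    simp [Matrix.charmatrix_apply_eq, Matrix.one_apply]
  · simp [Matrix.charmatrix_apply_ne _ _ _ h, Matrix.one_apply, h]

/-- If `B` satisfies the matrix Riccati equation `B' + B² + k·id = 0` with `k > 0` on
`[0, π/√k]`, then `B(0)` has no real eigenvalue; in particular, if `n` is odd, no such `B`
exists. -/
theorem stmt_16 {n : ℕ} (k : ℝ) (hk : 0 < k)
    (B B' : ℝ → EuclideanSpace ℝ (Fin n) →L[ℝ] EuclideanSpace ℝ (Fin n))
    (hB : ∀ t, HasDerivAt B (B' t) t)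
    (hRic : ∀ t ∈ Set.Icc (0 : ℝ) (π / Real.sqrt k),
      B' t + B t ∘L B t + k • ContinuousLinearMap.id ℝ (EuclideanSpace ℝ (Fin n)) = 0) :
    (¬ ∃ (lam₀ : ℝ) (y₀ : EuclideanSpace ℝ (Fin n)), y₀ ≠ 0 ∧ B 0 y₀ = lam₀ • y₀) ∧
    (Odd n → False) := by
  set E := EuclideanSpace ℝ (Fin n)
  set s : ℝ := Real.sqrt k with hs_def
  have hs : 0 < s := Real.sqrt_pos.mpr hk
  have hsk : s * s = k := Real.mul_self_sqrt hk.le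
  set T : ℝ := π / s with hT_def
  have hT : 0 < T := div_pos Real.pi_pos hs
  -- Part 1
  have h1 : ¬ ∃ (lam₀ : ℝ) (y₀ : E), y₀ ≠ 0 ∧ B 0 y₀ = lam₀ • y₀ := by
    rintro ⟨lam, y₀, hy₀, heig⟩
    set c : ℝ := lam / s with hc_def
    set f : ℝ → ℝ := fun t => Real.cos (s * t) + c * Real.sin (s * t) with hf_def
    set f1 : ℝ → ℝ := fun t => s * (c * Real.cos (s * t) - Real.sin (s * t)) with hf1_def
    have hst : ∀ t : ℝ, HasDerivAt (fun u : ℝ => s * u) s t := by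
      intro t
      simpa using (hasDerivAt_id t).const_mul s
    have hf : ∀ t, HasDerivAt f (f1 t) t := by
      intro t
      have hcos : HasDerivAt (fun u : ℝ => Real.cos (s * u)) (-Real.sin (s * t) * s) t :=
        (Real.hasDerivAt_cos (s * t)).comp t (hst t)
      have hsin : HasDerivAt (fun u : ℝ => c * Real.sin (s * u)) (c * (Real.cos (s * t) * s)) t :=
        ((Real.hasDerivAt_sin (s * t)).comp t (hst t)).const_mul c
      have := hcos.add hsin
      convert this using 1
      case e'_9 =>
        change s * (c * Real.cos (s * t) - Real.sin (s * t)) = _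
        ring
      all_goals rfl
    have hf1 : ∀ t, HasDerivAt f1 (-(k * f t)) t := by
      intro t
      have hcos : HasDerivAt (fun u : ℝ => c * Real.cos (s * u)) (c * (-Real.sin (s * t) * s)) t :=
        ((Real.hasDerivAt_cos (s * t)).comp t (hst t)).const_mul c
      have hsin : HasDerivAt (fun u : ℝ => Real.sin (s * u)) (Real.cos (s * t) * s) t :=
        (Real.hasDerivAt_sin (s * t)).comp t (hst t)
      have := (hcos.sub hsin).const_mul s
      convert this using 1
      case e'_9 =>
        change -(k * (Real.cos (s * t) + c * Real.sin (s * t))) = _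
        rw [← hsk]
        ring
      all_goals rfl
    have hBy : ∀ t, HasDerivAt (fun u => B u y₀) (B' t y₀) t := by
      intro t
      have := (hB t).clm_apply (hasDerivAt_const t y₀)
      simpa using this
    set R : ℝ → E := fun t => f1 t • y₀ - f t • B t y₀ with hR_def
    have hR : ∀ t, HasDerivAt R
        ((-(k * f t)) • y₀ - (f1 t • B t y₀ + f t • B' t y₀)) t := by
      intro t
      have h := ((hf1 t).smul_const y₀).sub ((hf t).smul (hBy t))
      convert h using 1
      case e'_9 => abel
      all_goals rfl
    -- On the interval, R satisfies R' = -(B t) (R t)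
    have hRode : ∀ t ∈ Set.Icc (0 : ℝ) T, HasDerivAt R (-(B t (R t))) t := by
      intro t ht
      have hric := hRic t ht
      have hric' : B' t y₀ + B t (B t y₀) + k • y₀ = 0 := by
        have := congrArg (fun L => L y₀) hric
        simpa using this
      have hB'y : B' t y₀ = -(B t (B t y₀)) - k • y₀ := by
        have := hric'
        rw [← sub_eq_zero] at this ⊢
        rw [← this]; abel
      have := hR t
      convert this using 1
      rw [hR_def]
      simp only [map_sub, map_smul, hB'y]
      module
    -- Lipschitz bound for the vector field
    have hBcont : Continuous B := by
      rw [continuous_iff_continuousAt]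
      exact fun t => (hB t).continuousAt
    obtain ⟨C, hC⟩ := (isCompact_Icc (a := (0:ℝ)) (b := T)).exists_bound_of_continuousOn
      hBcont.continuousOn
    set clamp : ℝ → ℝ := fun t => max 0 (min t T) with hclamp_def
    have hclamp_mem : ∀ t, clamp t ∈ Set.Icc (0 : ℝ) T := by
      intro t
      exact ⟨le_max_left _ _, max_le hT.le (min_le_right _ _)⟩
    have hclamp_eq : ∀ t ∈ Set.Icc (0 : ℝ) T, clamp t = t := by
      intro t ht
      rw [hclamp_def]
      simp only
      rw [min_eq_left ht.2, max_eq_right ht.1]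
    set K : NNReal := ⟨max C 0, le_max_right _ _⟩ with hK_def
    set v : ℝ → E → E := fun t x => -(B (clamp t) x) with hv_def
    have hv : ∀ t, LipschitzOnWith K (v t) Set.univ := by
      intro t
      apply LipschitzWith.lipschitzOnWith
      apply LipschitzWith.of_dist_le_mul
      intro x y
      have h1' : v t x - v t y = -(B (clamp t) (x - y)) := by
        rw [hv_def]; simp [map_sub]; abel
      rw [dist_eq_norm, dist_eq_norm, h1', norm_neg]
      calc ‖B (clamp t) (x - y)‖ ≤ ‖B (clamp t)‖ * ‖x - y‖ :=
            (B (clamp t)).le_opNorm _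
        _ ≤ (max C 0) * ‖x - y‖ := by
            apply mul_le_mul_of_nonneg_right _ (norm_nonneg _)
            exact le_trans (hC _ (hclamp_mem t)) (le_max_left _ _)
    -- uniqueness: R = 0 on [0, T]
    have hRcont : ContinuousOn R (Set.Icc 0 T) :=
      (continuous_iff_continuousAt.mpr fun t => (hR t).continuousAt).continuousOn
    have hf10 : f1 0 = lam := by
      simp only [hf1_def, hc_def, mul_zero, Real.cos_zero, Real.sin_zero, sub_zero, mul_one]
      field_simp
    have hf00 : f 0 = 1 := by simp [hf_def]
    have hR0 : R 0 = 0 := by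
      show f1 0 • y₀ - f 0 • B 0 y₀ = 0
      rw [heig, hf10, hf00, one_smul, sub_self]
    have huniq : Set.EqOn R (fun _ => (0 : E)) (Set.Icc 0 T) := by
      apply ODE_solution_unique_of_mem_Icc_right (fun t _ => hv t) hRcont
      · intro t ht
        have h := hRode t (Set.Ico_subset_Icc_self ht)
        have : v t (R t) = -(B t (R t)) := by
          rw [hv_def]
          simp only
          rw [hclamp_eq t (Set.Ico_subset_Icc_self ht)]
        rw [this]
        exact h.hasDerivWithinAt
      · exact fun t _ => Set.mem_univ _
      · exact continuousOn_const
      · intro t ht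
        have : v t 0 = 0 := by rw [hv_def]; simp
        rw [this]
        exact (hasDerivWithinAt_const _ _ _)
      · exact fun t _ => Set.mem_univ _
      · simpa using hR0
    -- Find a zero of f in [0, T]
    have hfT : f T = -1 := by
      have hsT : s * T = π := by
        rw [hT_def]; field_simp
      rw [hf_def]; simp [hsT]
    have hf0 : f 0 = 1 := by rw [hf_def]; simp
    have hfc : Continuous f := by
      rw [hf_def]
      exact (Real.continuous_cos.comp (continuous_const.mul continuous_id)).add
        (continuous_const.mul (Real.continuous_sin.comp (continuous_const.mul continuous_id)))
    obtain ⟨t₁, ht₁mem, ht₁⟩ : ∃ t₁ ∈ Set.Icc (0:ℝ) T, f t₁ = 0 := by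
      have hivt := intermediate_value_Icc' hT.le hfc.continuousOn
      have h0 : (0 : ℝ) ∈ Set.Icc (f T) (f 0) := by rw [hfT, hf0]; norm_num
      obtain ⟨x, hx, hx0⟩ := hivt h0
      exact ⟨x, hx, hx0⟩
    -- Derive the contradiction
    have hRt₁ : R t₁ = 0 := huniq ht₁mem
    have hf1t₁ : f1 t₁ = 0 := by
      rw [hR_def] at hRt₁
      simp only [ht₁, zero_smul, sub_zero] at hRt₁
      exact (smul_eq_zero.mp hRt₁).resolve_right hy₀
    have h1' : Real.cos (s * t₁) + c * Real.sin (s * t₁) = 0 := ht₁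
    have h2' : c * Real.cos (s * t₁) - Real.sin (s * t₁) = 0 := by
      rw [hf1_def] at hf1t₁
      simp only at hf1t₁
      rcases mul_eq_zero.mp hf1t₁ with h | h
      · exact absurd h hs.ne'
      · exact h
    have hpyth := Real.sin_sq_add_cos_sq (s * t₁)
    have h3 : (0 : ℝ) = 1 := by
      linear_combination (-(Real.cos (s * t₁))) * h1' + (Real.sin (s * t₁)) * h2' + hpyth
    norm_num at h3
  refine ⟨h1, ?_⟩
  -- Part 2
  intro hodd
  apply h1
  set g : E →ₗ[ℝ] E := ((B 0 : E →L[ℝ] E) : E →ₗ[ℝ] E) with hg_def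
  set b := Module.Free.chooseBasis ℝ E with hb_def
  set M := LinearMap.toMatrix b b g with hM_def
  have hfinrank : Module.finrank ℝ E = n := finrank_euclideanSpace_fin
  have hcard : Fintype.card (Module.Free.ChooseBasisIndex ℝ E) = n := by
    rw [← Module.finrank_eq_card_chooseBasisIndex, hfinrank]
  have hmonic : M.charpoly.Monic := M.charpoly_monic
  have hdeg : M.charpoly.natDegree = n := by
    rw [Matrix.charpoly_natDegree_eq_dim, hcard]
  obtain ⟨lam, hlam⟩ := aux_exists_root_of_odd_natDegree M.charpoly hmonic (by rw [hdeg]; exact hodd)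
  have hdet : (lam • (1 : Matrix _ _ ℝ) - M).det = 0 := by
    rw [← aux_eval_charpoly]
    exact hlam
  have htoM : LinearMap.toMatrix b b (lam • (LinearMap.id : E →ₗ[ℝ] E) - g) =
      lam • (1 : Matrix _ _ ℝ) - M := by
    rw [map_sub, map_smul, LinearMap.toMatrix_id, hM_def]
  have hdet' : LinearMap.det (lam • (LinearMap.id : E →ₗ[ℝ] E) - g) = 0 := by
    rw [← LinearMap.det_toMatrix b, htoM, hdet]
  have hker := LinearMap.bot_lt_ker_of_det_eq_zero hdet'
  obtain ⟨y, hy_mem, hy_ne⟩ := Submodule.exists_mem_ne_zero_of_ne_bot hker.ne'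
  refine ⟨lam, y, hy_ne, ?_⟩
  have := hy_mem
  rw [LinearMap.mem_ker] at this
  simp only [LinearMap.sub_apply, LinearMap.smul_apply, LinearMap.id_apply] at this
  have hgy : g y = lam • y := by
    rw [← sub_eq_zero]
    rw [← neg_sub, this, neg_zero]
  simpa [hg_def] using hgy
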